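/- Let $a,b,\alpha\in\mathbb{R}$ with $a\ne 0$, $b>0$, $\alpha>1$, and suppose $a_n \sim (-1)^n a n^{\alpha}$ and $b_n \sim b n^{\alpha}$ as $n\to\infty$ (i.e. $a_n/((-1)^n a n^{\alpha}) \to 1$ and $b_n/(b n^{\alpha}) \to 1$). Then $\lim_{n\to\infty} \frac{b_{n-1}b_{n-2} + |a_{n-1}+a_n|\,b_{n-1} + |a_n+a_{n+1}|\,b_n + b_n b_{n+1}}{b_{n-1}^2 + a_n^2 + b_n^2} = \frac{2b^2}{a^2 + 2b^2}$, which is strictly less than $1$. -/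

import Mathlib

open Filter Topology

private lemma nat_ratio_sub (k : ℕ) :
    Tendsto (fun n : ℕ => ((n - k : ℕ) : ℝ) / (n : ℝ)) atTop (𝓝 1) := by
  have hk : Tendsto (fun n : ℕ => (k : ℝ) / (n : ℝ)) atTop (𝓝 0) := by
    simpa [div_eq_mul_inv] using tendsto_one_div_atTop_nhds_zero_nat.const_mul (k:ℝ)
  have h0 : Tendsto (fun n : ℕ => 1 - (k : ℝ) / (n : ℝ)) atTop (𝓝 1) := by
    simpa using tendsto_const_nhds.sub hk
  refine h0.congr' ?_
  filter_upwards [eventually_ge_atTop (k+1)] with n hn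
  have hk' : k ≤ n := by omega
  have hnn : 0 < n := by omega
  have hn0 : (0:ℝ) < n := by exact_mod_cast hnn
  rw [Nat.cast_sub hk']
  field_simp

private lemma nat_ratio_add :
    Tendsto (fun n : ℕ => ((n + 1 : ℕ) : ℝ) / (n : ℝ)) atTop (𝓝 1) := by
  have h0 : Tendsto (fun n : ℕ => 1 + 1 / (n : ℝ)) atTop (𝓝 1) := by
    simpa using tendsto_const_nhds.add (tendsto_one_div_atTop_nhds_zero_nat : Tendsto (fun n : ℕ => 1 / (n:ℝ)) atTop (𝓝 0))
  refine h0.congr' ?_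
  filter_upwards [eventually_ge_atTop 1] with n hn
  have hn0 : (0:ℝ) < n := by exact_mod_cast hn
  push_cast
  field_simp

private lemma rpow_ratio (α : ℝ) (g : ℕ → ℕ)
    (hg : Tendsto (fun n : ℕ => ((g n : ℕ) : ℝ) / (n : ℝ)) atTop (𝓝 1)) :
    Tendsto (fun n : ℕ => ((g n : ℕ) : ℝ) ^ α / (n : ℝ) ^ α) atTop (𝓝 1) := by
  have hc : ContinuousAt (fun x : ℝ => x ^ α) 1 :=
    Real.continuousAt_rpow_const 1 α (Or.inl one_ne_zero)
  have h := hc.tendsto.comp hg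
  rw [Real.one_rpow] at h
  refine h.congr fun n => ?_
  simp [Function.comp, Real.div_rpow (Nat.cast_nonneg _) (Nat.cast_nonneg _)]

/-- For `a_n ~ (-1)^n a n^α` and `b_n ~ b n^α` with `a ≠ 0`, `b > 0`, `α > 1`,
the quotient in the self-adjointness criterion converges to `2b²/(a²+2b²) < 1`. -/
theorem jacobi_quotient_limit
    (a b α : ℝ) (ha : a ≠ 0) (hb : 0 < b) (hα : 1 < α)
    (an bn : ℕ → ℝ) (hbn : ∀ n, 0 < bn n)
    (han : Tendsto (fun n : ℕ => an n / ((-1 : ℝ) ^ n * a * (n : ℝ) ^ α))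
      atTop (𝓝 1))
    (hbn' : Tendsto (fun n : ℕ => bn n / (b * (n : ℝ) ^ α)) atTop (𝓝 1)) :
    Tendsto (fun n : ℕ =>
        (bn (n - 1) * bn (n - 2) + |an (n - 1) + an n| * bn (n - 1)
            + |an n + an (n + 1)| * bn n + bn n * bn (n + 1))
          / (bn (n - 1) ^ 2 + an n ^ 2 + bn n ^ 2))
      atTop (𝓝 (2 * b ^ 2 / (a ^ 2 + 2 * b ^ 2))) ∧
    2 * b ^ 2 / (a ^ 2 + 2 * b ^ 2) < 1 := by
  have hb0 : b ≠ 0 := ne_of_gt hb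
  have ha2 : (0:ℝ) < a ^ 2 := by positivity
  have r1 := rpow_ratio α _ (nat_ratio_sub 1)
  have r2 := rpow_ratio α _ (nat_ratio_sub 2)
  have r3 := rpow_ratio α _ nat_ratio_add
  -- scaled `bn` limits
  have key : ∀ g : ℕ → ℕ, Tendsto g atTop atTop →
      Tendsto (fun n : ℕ => ((g n : ℕ) : ℝ) ^ α / (n : ℝ) ^ α) atTop (𝓝 1) →
      Tendsto (fun n : ℕ => bn (g n) / (b * (n : ℝ) ^ α)) atTop (𝓝 1) := by
    intro g hg hr
    have h1 := (hbn'.comp hg).mul hr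
    rw [mul_one] at h1
    refine h1.congr' ?_
    filter_upwards [hg.eventually_ge_atTop 1, eventually_ge_atTop 1] with n hgn hn
    have h1' : (0:ℝ) < ((g n : ℕ) : ℝ) ^ α :=
      Real.rpow_pos_of_pos (by exact_mod_cast hgn) α
    have h2' : (0:ℝ) < ((n : ℕ) : ℝ) ^ α :=
      Real.rpow_pos_of_pos (by exact_mod_cast hn) α
    have e1 : ((g n : ℕ) : ℝ) ^ α ≠ 0 := ne_of_gt h1'
    have e2 : ((n : ℕ) : ℝ) ^ α ≠ 0 := ne_of_gt h2'
    simp only [Function.comp]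
    field_simp
  have u1 := key (fun n => n - 1) (tendsto_sub_atTop_nat 1) r1
  have u2 := key (fun n => n - 2) (tendsto_sub_atTop_nat 2) r2
  have u3 : Tendsto (fun n : ℕ => bn n / (b * (n : ℝ) ^ α)) atTop (𝓝 1) := hbn'
  have u4 := key (fun n => n + 1) (tendsto_add_atTop_nat 1) r3
  -- scaled `an` squared
  have hA : Tendsto (fun n : ℕ => an n ^ 2 / (a ^ 2 * ((n:ℝ) ^ α) ^ 2)) atTop (𝓝 1) := by
    have h := han.mul han
    rw [mul_one] at h
    refine h.congr fun n => ?_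
    have hsq : ((-1:ℝ) ^ n) ^ 2 = 1 := by
      rw [← pow_mul, mul_comm, pow_mul]; norm_num
    rw [div_mul_div_comm, ← sq, ← sq, mul_pow, mul_pow, hsq, one_mul]
  -- |an (n-1) + an n| / n^α → 0
  have hW : Tendsto (fun n : ℕ => |an (n-1) + an n| / (n:ℝ) ^ α) atTop (𝓝 0) := by
    have hs1 : Tendsto (fun n : ℕ =>
        an (n-1) / ((-1:ℝ)^(n-1) * a * ((n-1:ℕ):ℝ)^α)) atTop (𝓝 1) :=
      han.comp (tendsto_sub_atTop_nat 1)
    have hdiff : Tendsto (fun n : ℕ =>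
        an n / ((-1:ℝ)^n * a * (n:ℝ)^α)
          - an (n-1) / ((-1:ℝ)^(n-1) * a * ((n-1:ℕ):ℝ)^α) * (((n-1:ℕ):ℝ)^α / (n:ℝ)^α))
        atTop (𝓝 0) := by
      have := han.sub (hs1.mul r1)
      simpa using this
    have habs := hdiff.abs
    rw [abs_zero] at habs
    have habs' := habs.const_mul |a|
    rw [mul_zero] at habs'
    refine habs'.congr' ?_
    filter_upwards [eventually_ge_atTop 2] with n hn
    have hmn : n - 1 + 1 = n := by omega
    have hfn : (0:ℝ) < (n:ℝ)^α :=
      Real.rpow_pos_of_pos (by exact_mod_cast (by omega : 0 < n)) α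
    have hfm : (0:ℝ) < ((n-1:ℕ):ℝ)^α :=
      Real.rpow_pos_of_pos (by exact_mod_cast (by omega : 0 < n - 1)) α
    have hsign : ((-1:ℝ)^(n-1)) = -(-1:ℝ)^n := by
      have : (-1:ℝ)^n = (-1:ℝ)^(n-1) * (-1) := by rw [← pow_succ, hmn]
      rw [this]; ring
    have h2 : an (n-1) / ((-1:ℝ)^(n-1) * a * ((n-1:ℕ):ℝ)^α) * (((n-1:ℕ):ℝ)^α / (n:ℝ)^α)
        = - (an (n-1) / ((-1:ℝ)^n * a * (n:ℝ)^α)) := by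
      rw [hsign, div_mul_div_comm]
      rw [show -(-1:ℝ)^n * a * ((n-1:ℕ):ℝ)^α * ((n:ℝ)^α)
          = (-((-1:ℝ)^n * a * (n:ℝ)^α)) * ((n-1:ℕ):ℝ)^α by ring]
      rw [mul_div_mul_right _ _ (ne_of_gt hfm), div_neg]
    have hkey : an n / ((-1:ℝ)^n * a * (n:ℝ)^α)
          - an (n-1) / ((-1:ℝ)^(n-1) * a * ((n-1:ℕ):ℝ)^α) * (((n-1:ℕ):ℝ)^α / (n:ℝ)^α)
        = (an (n-1) + an n) / ((-1:ℝ)^n * a * (n:ℝ)^α) := by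
      rw [h2, sub_neg_eq_add, ← add_div, add_comm]
    rw [hkey, abs_div, abs_mul, abs_mul, abs_pow, abs_neg, abs_one, one_pow, one_mul,
      abs_of_pos hfn]
    field_simp
  -- |an n + an (n+1)| / n^α → 0 by shifting
  have hW2 : Tendsto (fun n : ℕ => |an n + an (n+1)| / (n:ℝ) ^ α) atTop (𝓝 0) := by
    have hsh : Tendsto (fun n : ℕ => |an n + an (n+1)| / ((n+1:ℕ):ℝ) ^ α) atTop (𝓝 0) := by
      refine (hW.comp (tendsto_add_atTop_nat 1)).congr fun n => ?_
      simp [Function.comp]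
    have h := hsh.mul r3
    rw [zero_mul] at h
    refine h.congr' ?_
    filter_upwards [eventually_ge_atTop 1] with n hn
    have hfm : (0:ℝ) < ((n+1:ℕ):ℝ)^α :=
      Real.rpow_pos_of_pos (by exact_mod_cast (by omega : 0 < n + 1)) α
    rw [div_mul_div_comm]
    rw [show ((n+1:ℕ):ℝ)^α * ((n:ℝ)^α) = ((n:ℝ)^α) * ((n+1:ℕ):ℝ)^α by ring]
    rw [mul_div_mul_right _ _ (ne_of_gt hfm)]
  -- component limits of the scaled numerator and denominator
  have hN1 : Tendsto (fun n : ℕ => bn (n-1) * bn (n-2) / ((n:ℝ)^α) ^ 2)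
      atTop (𝓝 (b^2)) := by
    have h := ((u1.mul u2).const_mul (b^2))
    rw [mul_one, mul_one] at h
    refine h.congr' ?_
    filter_upwards [eventually_ge_atTop 1] with n hn
    have hfn : ((n:ℝ)^α) ≠ 0 :=
      ne_of_gt (Real.rpow_pos_of_pos (by exact_mod_cast hn) α)
    field_simp
  have hN4 : Tendsto (fun n : ℕ => bn n * bn (n+1) / ((n:ℝ)^α) ^ 2)
      atTop (𝓝 (b^2)) := by
    have h := ((u3.mul u4).const_mul (b^2))
    rw [mul_one, mul_one] at h
    refine h.congr' ?_
    filter_upwards [eventually_ge_atTop 1] with n hn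
    have hfn : ((n:ℝ)^α) ≠ 0 :=
      ne_of_gt (Real.rpow_pos_of_pos (by exact_mod_cast hn) α)
    field_simp
  have hN2 : Tendsto (fun n : ℕ => |an (n-1) + an n| * bn (n-1) / ((n:ℝ)^α) ^ 2)
      atTop (𝓝 0) := by
    have h := (hW.mul u1).const_mul b
    rw [mul_one, mul_zero] at h
    refine h.congr' ?_
    filter_upwards [eventually_ge_atTop 1] with n hn
    have hfn : ((n:ℝ)^α) ≠ 0 :=
      ne_of_gt (Real.rpow_pos_of_pos (by exact_mod_cast hn) α)
    field_simp
  have hN3 : Tendsto (fun n : ℕ => |an n + an (n+1)| * bn n / ((n:ℝ)^α) ^ 2)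
      atTop (𝓝 0) := by
    have h := (hW2.mul u3).const_mul b
    rw [mul_one, mul_zero] at h
    refine h.congr' ?_
    filter_upwards [eventually_ge_atTop 1] with n hn
    have hfn : ((n:ℝ)^α) ≠ 0 :=
      ne_of_gt (Real.rpow_pos_of_pos (by exact_mod_cast hn) α)
    field_simp
  have hD1 : Tendsto (fun n : ℕ => bn (n-1) ^ 2 / ((n:ℝ)^α) ^ 2)
      atTop (𝓝 (b^2)) := by
    have h := ((u1.mul u1).const_mul (b^2))
    rw [mul_one, mul_one] at h
    refine h.congr' ?_
    filter_upwards [eventually_ge_atTop 1] with n hn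
    have hfn : ((n:ℝ)^α) ≠ 0 :=
      ne_of_gt (Real.rpow_pos_of_pos (by exact_mod_cast hn) α)
    field_simp
  have hD3 : Tendsto (fun n : ℕ => bn n ^ 2 / ((n:ℝ)^α) ^ 2)
      atTop (𝓝 (b^2)) := by
    have h := ((u3.mul u3).const_mul (b^2))
    rw [mul_one, mul_one] at h
    refine h.congr' ?_
    filter_upwards [eventually_ge_atTop 1] with n hn
    have hfn : ((n:ℝ)^α) ≠ 0 :=
      ne_of_gt (Real.rpow_pos_of_pos (by exact_mod_cast hn) α)
    field_simp
  have hD2 : Tendsto (fun n : ℕ => an n ^ 2 / ((n:ℝ)^α) ^ 2) atTop (𝓝 (a^2)) := by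
    have h := hA.const_mul (a^2)
    rw [mul_one] at h
    refine h.congr' ?_
    filter_upwards [eventually_ge_atTop 1] with n hn
    have hfn : ((n:ℝ)^α) ≠ 0 :=
      ne_of_gt (Real.rpow_pos_of_pos (by exact_mod_cast hn) α)
    field_simp
  -- combined scaled numerator and denominator
  have hN : Tendsto (fun n : ℕ =>
      (bn (n - 1) * bn (n - 2) + |an (n - 1) + an n| * bn (n - 1)
          + |an n + an (n + 1)| * bn n + bn n * bn (n + 1)) / ((n:ℝ)^α) ^ 2)
      atTop (𝓝 (2 * b ^ 2)) := by
    have h := ((hN1.add hN2).add hN3).add hN4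
    rw [show b^2 + 0 + 0 + b^2 = 2 * b^2 by ring] at h
    refine h.congr fun n => ?_
    rw [add_div, add_div, add_div]
  have hD : Tendsto (fun n : ℕ =>
      (bn (n - 1) ^ 2 + an n ^ 2 + bn n ^ 2) / ((n:ℝ)^α) ^ 2)
      atTop (𝓝 (a ^ 2 + 2 * b ^ 2)) := by
    have h := (hD1.add hD2).add hD3
    rw [show b^2 + a^2 + b^2 = a^2 + 2 * b^2 by ring] at h
    refine h.congr fun n => ?_
    rw [add_div, add_div]
  have hDne : (a ^ 2 + 2 * b ^ 2) ≠ 0 := by positivity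
  have hQ := hN.div hD hDne
  constructor
  · refine hQ.congr' ?_
    filter_upwards [eventually_ge_atTop 1] with n hn
    have hfn : (((n:ℝ)^α) ^ 2) ≠ 0 := by
      have : (0:ℝ) < (n:ℝ)^α := Real.rpow_pos_of_pos (by exact_mod_cast hn) α
      positivity
    have hDpos : (0:ℝ) < bn (n - 1) ^ 2 + an n ^ 2 + bn n ^ 2 := by
      have h1 := hbn (n-1); have h2 := hbn n
      nlinarith [sq_nonneg (an n)]
    simp only [Pi.div_apply]
    rw [div_div_div_cancel_right₀ hfn]
  · rw [div_lt_one (by positivity)]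
    linarith
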